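/- For β > 2 and real parameters α > 0 and x ∈ (0,1], writing Δ = e^{α/β}, the volume of the degree interval [xΔ, Δ] in an (α,β)-power law graph satisfies vol([xΔ,Δ]) = Σ_{i=⌈xΔ⌉}^{⌊Δ⌋} ⌊e^α/i^β⌋·i ≤ (1+o(1))·e^{2α/β}/((β−2)·x^{β−2}) as α → ∞. -/
import Mathlib


open Real Filter

/-- Volume bound for the degree interval `[xΔ, Δ]` (with `Δ = e^{α/β}`) of an
`(α,β)`-power-law graph: it is at most `(1+o(1)) · e^{2α/β} / ((β-2) x^{β-2})` as `α → ∞`. -/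
theorem stmt_12 (β : ℝ) (hβ : 2 < β) (x : ℝ) (hx0 : 0 < x) (hx1 : x ≤ 1) :
    ∃ f : ℝ → ℝ, Tendsto f atTop (nhds 0) ∧
      ∀ α : ℝ, 0 < α →
        (∑ i ∈ Finset.Icc ⌈x * Real.exp (α / β)⌉₊ ⌊Real.exp (α / β)⌋₊,
            (⌊Real.exp α / (i : ℝ) ^ β⌋₊ : ℝ) * (i : ℝ)) ≤
          (1 + f α) * Real.exp (2 * α / β) / ((β - 2) * x ^ (β - 2)) := by
  have hβ0 : (0:ℝ) < β := by linarith
  refine ⟨fun α => (β - 2) / x * Real.exp (-(α / β)), ?_, ?_⟩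
  · have h1 : Tendsto (fun α : ℝ => -(α / β)) atTop atBot := by
      exact tendsto_neg_atTop_atBot.comp (tendsto_id.atTop_div_const hβ0)
    have h2 := (Real.tendsto_exp_atBot.comp h1).const_mul ((β - 2) / x)
    simpa using h2
  intro α hα
  set Δ := Real.exp (α / β) with hΔdef
  have hΔpos : 0 < Δ := Real.exp_pos _
  set m := ⌈x * Δ⌉₊ with hmdef
  set M := ⌊Δ⌋₊ with hMdef
  have hxΔ : 0 < x * Δ := by positivity
  have hm1 : 1 ≤ m := Nat.one_le_iff_ne_zero.mpr (by
    simp only [hmdef, ne_eq, Nat.ceil_eq_zero, not_le]; exact hxΔ)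
  have hmx : x * Δ ≤ (m : ℝ) := Nat.le_ceil _
  have hPpos : (0:ℝ) < x ^ (β - 2) := Real.rpow_pos_of_pos hx0 _
  have hfpos : (0:ℝ) < (β - 2) / x * Real.exp (-(α / β)) :=
    mul_pos (div_pos (by linarith) hx0) (Real.exp_pos _)
  by_cases hmM : m ≤ M
  swap
  · rw [Finset.Icc_eq_empty (by omega)]
    rw [Finset.sum_empty]
    have hrpos : 0 < (1 + (β - 2) / x * Real.exp (-(α / β))) * Real.exp (2 * α / β)
        / ((β - 2) * x ^ (β - 2)) :=
      div_pos (mul_pos (by linarith) (Real.exp_pos _)) (mul_pos (by linarith) hPpos)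
    linarith
  · have hm0R : (1:ℝ) ≤ (m:ℝ) := by exact_mod_cast hm1
    have hM0R : (1:ℝ) ≤ (M:ℝ) := by exact_mod_cast le_trans hm1 hmM
    -- termwise bound
    have hterm : ∀ i ∈ Finset.Icc m M,
        (⌊Real.exp α / (i : ℝ) ^ β⌋₊ : ℝ) * (i : ℝ) ≤ Real.exp α * (i : ℝ) ^ (1 - β) := by
      intro i hi
      have him : m ≤ i := (Finset.mem_Icc.mp hi).1
      have hipos : (0:ℝ) < (i:ℝ) := by
        have : 1 ≤ i := le_trans hm1 him
        exact_mod_cast this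
      have h1 : (⌊Real.exp α / (i:ℝ)^β⌋₊ : ℝ) ≤ Real.exp α / (i:ℝ)^β :=
        Nat.floor_le (by positivity)
      have h2 : Real.exp α / (i:ℝ)^β * (i:ℝ) = Real.exp α * (i:ℝ)^(1-β) := by
        rw [Real.rpow_sub hipos, Real.rpow_one]
        ring
      calc (⌊Real.exp α / (i:ℝ)^β⌋₊ : ℝ) * (i:ℝ) ≤ Real.exp α / (i:ℝ)^β * (i:ℝ) :=
            mul_le_mul_of_nonneg_right h1 hipos.le
        _ = _ := h2
    have hanti : AntitoneOn (fun t : ℝ => Real.exp α * t ^ (1 - β)) (Set.Icc (m:ℝ) (M:ℝ)) := by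
      intro s hs t ht hst
      have hs0 : 0 < s := lt_of_lt_of_le (by linarith) hs.1
      exact mul_le_mul_of_nonneg_left
        (Real.rpow_le_rpow_of_nonpos hs0 hst (by linarith)) (Real.exp_pos α).le
    -- split off first term and compare with the integral
    have hsplit : (∑ i ∈ Finset.Icc m M, Real.exp α * (i:ℝ) ^ (1 - β))
        = Real.exp α * (m:ℝ) ^ (1 - β)
          + ∑ i ∈ Finset.Ico m M, Real.exp α * ((i:ℝ) + 1) ^ (1 - β) := by
      rw [Finset.Icc_eq_cons_Ioc hmM, Finset.sum_cons]
      congr 1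
      have : Finset.Ioc m M = (Finset.Ico m M).map (addRightEmbedding 1) := by
        rw [Finset.map_add_right_Ico]
        rw [Finset.Ico_add_one_right_eq_Icc]
        exact (Finset.Icc_add_one_left_eq_Ioc m M).symm
      rw [this, Finset.sum_map]
      apply Finset.sum_congr rfl
      intro i _
      simp [addRightEmbedding]
    have hintle : (∑ i ∈ Finset.Ico m M, Real.exp α * ((i:ℝ) + 1) ^ (1 - β))
        ≤ ∫ t in (m:ℝ)..(M:ℝ), Real.exp α * t ^ (1 - β) := by
      have := AntitoneOn.sum_le_integral_Ico hmM hanti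
      convert this using 2 with i
      push_cast
      ring_nf
    have hintval : (∫ t in (m:ℝ)..(M:ℝ), Real.exp α * t ^ (1 - β))
        ≤ Real.exp α * ((m:ℝ) ^ (2 - β) / (β - 2)) := by
      rw [intervalIntegral.integral_const_mul]
      have h0 : (0:ℝ) ∉ Set.uIcc (m:ℝ) (M:ℝ) :=
        Set.notMem_uIcc_of_lt (by linarith) (by linarith)
      rw [integral_rpow (Or.inr ⟨by linarith, h0⟩)]
      have he : (1:ℝ) - β + 1 = 2 - β := by ring
      rw [he]
      apply mul_le_mul_of_nonneg_left _ (Real.exp_pos α).le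
      have hMnn : (0:ℝ) ≤ (M:ℝ) ^ (2 - β) := Real.rpow_nonneg (by linarith) _
      have heq : ((M:ℝ) ^ (2 - β) - (m:ℝ) ^ (2 - β)) / (2 - β)
          = ((m:ℝ) ^ (2 - β) - (M:ℝ) ^ (2 - β)) / (β - 2) := by
        rw [div_eq_div_iff (by linarith) (by linarith)]; ring
      rw [heq]
      apply div_le_div_of_nonneg_right ?_ ?_ <;> try linarith
    -- combine
    have hmain : (∑ i ∈ Finset.Icc m M, (⌊Real.exp α / (i : ℝ) ^ β⌋₊ : ℝ) * (i : ℝ))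
        ≤ Real.exp α * (m:ℝ) ^ (1 - β) + Real.exp α * ((m:ℝ) ^ (2 - β) / (β - 2)) := by
      calc _ ≤ ∑ i ∈ Finset.Icc m M, Real.exp α * (i:ℝ) ^ (1 - β) := Finset.sum_le_sum hterm
        _ = _ := hsplit
        _ ≤ _ := by have := le_trans hintle hintval; linarith
    -- replace m by x*Δ
    have h1b : (m:ℝ) ^ (1 - β) ≤ (x * Δ) ^ (1 - β) :=
      Real.rpow_le_rpow_of_nonpos hxΔ hmx (by linarith)
    have h2b : (m:ℝ) ^ (2 - β) ≤ (x * Δ) ^ (2 - β) :=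
      Real.rpow_le_rpow_of_nonpos hxΔ hmx (by linarith)
    have hmain2 : (∑ i ∈ Finset.Icc m M, (⌊Real.exp α / (i : ℝ) ^ β⌋₊ : ℝ) * (i : ℝ))
        ≤ Real.exp α * (x * Δ) ^ (1 - β) + Real.exp α * ((x * Δ) ^ (2 - β) / (β - 2)) := by
      refine le_trans hmain ?_
      have t1 := mul_le_mul_of_nonneg_left h1b (Real.exp_pos α).le
      have t2 : (m:ℝ) ^ (2 - β) / (β - 2) ≤ (x * Δ) ^ (2 - β) / (β - 2) := by
        apply div_le_div_of_nonneg_right h2b ?_ <;> linarith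
      have t3 := mul_le_mul_of_nonneg_left t2 (Real.exp_pos α).le
      linarith
    refine le_trans hmain2 ?_
    -- now pure computation
    have hmul1 : (x * Δ) ^ (1 - β) = x ^ (1 - β) * Δ ^ (1 - β) :=
      Real.mul_rpow hx0.le hΔpos.le
    have hmul2 : (x * Δ) ^ (2 - β) = x ^ (2 - β) * Δ ^ (2 - β) :=
      Real.mul_rpow hx0.le hΔpos.le
    have hΔr : ∀ c : ℝ, Δ ^ c = Real.exp (α / β * c) := by
      intro c; rw [hΔdef, ← Real.exp_mul]
    have hE1 : Real.exp α * Δ ^ (1 - β) = Real.exp (α / β) := by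
      rw [hΔr, ← Real.exp_add]
      congr 1
      field_simp
      ring
    have hE2 : Real.exp α * Δ ^ (2 - β) = Real.exp (2 * α / β) := by
      rw [hΔr, ← Real.exp_add]
      congr 1
      field_simp
      ring
    have hx1b : x ^ (1 - β) = x⁻¹ * (x ^ (β - 2))⁻¹ := by
      rw [← Real.rpow_neg_one x, ← Real.rpow_neg hx0.le, ← Real.rpow_add hx0]
      congr 1; ring
    have hx2b : x ^ (2 - β) = (x ^ (β - 2))⁻¹ := by
      rw [← Real.rpow_neg hx0.le]
      congr 1; ring
    have key : Real.exp α * (x * Δ) ^ (1 - β) + Real.exp α * ((x * Δ) ^ (2 - β) / (β - 2))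
        = (1 + (β - 2) / x * Real.exp (-(α / β))) * Real.exp (2 * α / β)
            / ((β - 2) * x ^ (β - 2)) := by
      rw [hmul1, hmul2]
      have hexp2 : Real.exp (2 * α / β) = Real.exp (α / β) * Real.exp (α / β) := by
        rw [← Real.exp_add]; congr 1; ring
      have hexpneg : Real.exp (-(α / β)) = (Real.exp (α / β))⁻¹ := Real.exp_neg _
      set E := Real.exp (α / β) with hE
      have hEpos : 0 < E := Real.exp_pos _
      calc Real.exp α * (x ^ (1 - β) * Δ ^ (1 - β))
            + Real.exp α * (x ^ (2 - β) * Δ ^ (2 - β) / (β - 2))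
          = x ^ (1 - β) * (Real.exp α * Δ ^ (1 - β))
            + x ^ (2 - β) * (Real.exp α * Δ ^ (2 - β)) / (β - 2) := by ring
        _ = x⁻¹ * (x ^ (β - 2))⁻¹ * E + (x ^ (β - 2))⁻¹ * (E * E) / (β - 2) := by
            rw [hE1, hE2, hx1b, hx2b, hexp2]
        _ = (1 + (β - 2) / x * E⁻¹) * (E * E) / ((β - 2) * x ^ (β - 2)) := by
            have hb2 : (β:ℝ) - 2 ≠ 0 := by linarith
            have hxne : x ≠ 0 := hx0.ne'
            have hPne : x ^ (β - 2) ≠ 0 := hPpos.ne'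
            have hEne : E ≠ 0 := hEpos.ne'
            field_simp
            ring
        _ = (1 + (β - 2) / x * Real.exp (-(α / β))) * Real.exp (2 * α / β)
              / ((β - 2) * x ^ (β - 2)) := by rw [← hexp2, ← hexpneg]
    rw [key]
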